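/- arXiv:1309.3094 — 5 statements merged into one kernel-verified Lean document; each statement's English description precedes it below -/
import Mathlib

section
/- Let q be a positive integer, 0 ≤ α < 1, and τ > 0. Define b_j = τ·j^{1/α} if α > 0 and b_j = e^{τj} if α = 0. Then there exists a constant C = C(τ, α) > 0 such that for every nondecreasing sequence (a_j)_{j≥q} of positive reals satisfying j + 1 ≤ a_j ≤ b_j for all j ≥ q, there exists an integer k ≥ q with a_{k+1} − a_k ≤ C·(a_k − k)^{1−α}. -/
open Real

private lemma key_ineq {α c d : ℝ} (hα : 0 < α) (hα1 : α < 1) (hc : 0 < c) (hd : 1 ≤ d) :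
    d ^ α + ((1 + c) ^ α - 1) ≤ (d + c * d ^ (1 - α)) ^ α := by
  have hd0 : (0:ℝ) < d := lt_of_lt_of_le one_pos hd
  set l := d ^ (-α) with hl
  have hl0 : 0 < l := Real.rpow_pos_of_pos hd0 _
  have hl1 : l ≤ 1 := Real.rpow_le_one_of_one_le_of_nonpos hd (by linarith)
  have hcon := (Real.concaveOn_rpow hα.le hα1.le).2 (x := 1) (y := 1 + c)
    (Set.mem_Ici.2 zero_le_one) (Set.mem_Ici.2 (by linarith))
    (by linarith : (0:ℝ) ≤ 1 - l) hl0.le (by ring)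
  simp only [smul_eq_mul, Real.one_rpow] at hcon
  have e1 : (1 - l) * 1 + l * (1 + c) = 1 + c * l := by ring
  rw [e1] at hcon
  have hdl : d ^ α * l = 1 := by
    rw [hl, ← Real.rpow_add hd0]; simp
  have e2 : d + c * d ^ (1 - α) = d * (1 + c * l) := by
    have h3 : d ^ (1 - α) = d * l := by
      rw [hl, sub_eq_add_neg, Real.rpow_add hd0, Real.rpow_one]
    rw [h3]; ring
  have hmul := mul_le_mul_of_nonneg_left hcon (Real.rpow_nonneg hd0.le α)
  have e3 : d ^ α * ((1 - l) * 1 + l * (1 + c) ^ α) = d ^ α + ((1 + c) ^ α - 1) := by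
    linear_combination ((1 + c) ^ α - 1) * hdl
  rw [e2, Real.mul_rpow hd0.le (by nlinarith : (0:ℝ) ≤ 1 + c * l)]
  nlinarith [hmul, e3]

theorem stmt_0 (q : ℕ) (hq : 0 < q) (α τ : ℝ) (hα0 : 0 ≤ α) (hα1 : α < 1) (hτ : 0 < τ) :
    ∃ C : ℝ, 0 < C ∧ ∀ a : ℕ → ℝ,
      (∀ j, q ≤ j → 0 < a j) →
      (∀ j, q ≤ j → a j ≤ a (j + 1)) →
      (∀ j, q ≤ j → (j : ℝ) + 1 ≤ a j ∧
        a j ≤ (if 0 < α then τ * (j : ℝ) ^ (1 / α) else Real.exp (τ * j))) →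
      ∃ k : ℕ, q ≤ k ∧ a (k + 1) - a k ≤ C * (a k - k) ^ (1 - α) := by
  by_cases hα : 0 < α
  · -- case α > 0
    set γ : ℝ := 2 * τ ^ α with hγdef
    have hτα : 0 < τ ^ α := Real.rpow_pos_of_pos hτ α
    have hγ : 0 < γ := by positivity
    set c : ℝ := (1 + γ) ^ (1 / α) - 1 with hcdef
    have hc : 0 < c := by
      have h1 : 1 < (1 + γ) ^ (1 / α) :=
        Real.one_lt_rpow_iff_of_pos (by linarith) |>.2 (Or.inl ⟨by linarith, by positivity⟩)
      simp only [hcdef]; linarith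
    have hcγ : (1 + c) ^ α = 1 + γ := by
      have h1 : 1 + c = (1 + γ) ^ (1 / α) := by simp [hcdef]
      rw [h1, ← Real.rpow_mul (by linarith), one_div_mul_cancel hα.ne', Real.rpow_one]
    refine ⟨c + 1, by linarith, fun a hpos hmono hb => ?_⟩
    by_contra hcon
    push_neg at hcon
    set d : ℕ → ℝ := fun k => a k - k with hd
    have hd1 : ∀ k, q ≤ k → 1 ≤ d k := by
      intro k hk
      have := (hb k hk).1
      simp only [hd]; linarith
    have hstep : ∀ k, q ≤ k → d k + c * d k ^ (1 - α) ≤ d (k + 1) := by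
      intro k hk
      have h1 := hcon k hk
      have hdk := hd1 k hk
      have hpow : 1 ≤ d k ^ (1 - α) := by
        calc (1:ℝ) = 1 ^ (1 - α) := (Real.one_rpow _).symm
        _ ≤ d k ^ (1 - α) := Real.rpow_le_rpow zero_le_one hdk (by linarith)
      simp only [hd] at h1 ⊢
      push_cast
      nlinarith
    have key2 : ∀ n : ℕ, 1 ≤ d (q + n) ∧ 1 + n * γ ≤ (d (q + n)) ^ α := by
      intro n
      induction n with
      | zero =>
        have h1 := hd1 q le_rfl
        refine ⟨by simpa using h1, ?_⟩
        simp only [Nat.cast_zero, zero_mul, add_zero, Nat.add_zero]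
        calc (1:ℝ) = 1 ^ α := (Real.one_rpow _).symm
        _ ≤ d q ^ α := Real.rpow_le_rpow zero_le_one h1 hα0
      | succ n ih =>
        have hk : q ≤ q + n := Nat.le_add_right _ _
        have hs := hstep (q + n) hk
        have hkey := key_ineq hα hα1 hc ih.1
        have hpos2 : 0 ≤ c * d (q + n) ^ (1 - α) :=
          mul_nonneg hc.le (Real.rpow_nonneg (by linarith [ih.1]) _)
        have hd2 : 1 ≤ d (q + n + 1) := by linarith [ih.1]
        have hmono2 : (d (q + n) + c * d (q + n) ^ (1 - α)) ^ α ≤ d (q + n + 1) ^ α :=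
          Real.rpow_le_rpow (by linarith [ih.1]) hs hα0
        have : 1 + (n : ℝ) * γ + γ ≤ d (q + n + 1) ^ α := by
          rw [hcγ] at hkey
          linarith [ih.2]
        refine ⟨hd2, ?_⟩
        show 1 + ((n + 1 : ℕ) : ℝ) * γ ≤ d (q + n + 1) ^ α
        push_cast
        linarith
    -- contradiction at k = 2q+1
    set k : ℕ := q + (q + 1) with hkdef
    have hkq : q ≤ k := Nat.le_add_right _ _
    have hub0 := (hb k hkq).2
    rw [if_pos hα] at hub0
    have hdk1 := (key2 (q + 1)).1
    have hlb := (key2 (q + 1)).2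
    have hub : d k ^ α ≤ τ ^ α * (k : ℝ) := by
      have h1 : d k ≤ τ * (k : ℝ) ^ (1 / α) := by
        simp only [hd]
        have : (0:ℝ) ≤ k := Nat.cast_nonneg _
        linarith
      have h2 : d k ^ α ≤ (τ * (k : ℝ) ^ (1 / α)) ^ α :=
        Real.rpow_le_rpow (by linarith [hdk1]) h1 hα0
      rwa [Real.mul_rpow hτ.le (Real.rpow_nonneg (Nat.cast_nonneg _) _),
        ← Real.rpow_mul (Nat.cast_nonneg _), one_div_mul_cancel hα.ne', Real.rpow_one] at h2
    have hkcast : (k : ℝ) = 2 * q + 1 := by simp [hkdef]; push_cast; ring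
    rw [hkcast] at hub
    have : (1:ℝ) + ((q:ℝ) + 1) * γ ≤ τ ^ α * (2 * q + 1) := by
      have := hlb
      push_cast at this
      linarith
    simp only [hγdef] at this
    nlinarith [hτα, (Nat.cast_nonneg q : (0:ℝ) ≤ q)]
  · -- case α = 0
    have hα' : α = 0 := le_antisymm (not_lt.1 hα) hα0
    subst hα'
    refine ⟨Real.exp (2 * τ), Real.exp_pos _, fun a hpos hmono hb => ?_⟩
    by_contra hcon
    push_neg at hcon
    simp only [sub_zero, Real.rpow_one] at hcon
    set E : ℝ := Real.exp (2 * τ) with hE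
    have hE1 : 1 < E := by
      rw [hE, ← Real.exp_zero]
      exact Real.exp_lt_exp.2 (by linarith)
    set d : ℕ → ℝ := fun k => a k - k with hd
    have hd1 : ∀ k, q ≤ k → 1 ≤ d k := by
      intro k hk
      have := (hb k hk).1
      simp only [hd]; linarith
    have hstep : ∀ k, q ≤ k → E * d k ≤ d (k + 1) := by
      intro k hk
      have h1 := hcon k hk
      have hdk : 1 ≤ a k - (k : ℝ) := by have := (hb k hk).1; linarith
      simp only [hd] at h1 ⊢
      push_cast
      nlinarith
    have key2 : ∀ n : ℕ, 1 ≤ d (q + n) ∧ E ^ n ≤ d (q + n) := by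
      intro n
      induction n with
      | zero => exact ⟨by simpa using hd1 q le_rfl, by simpa using hd1 q le_rfl⟩
      | succ n ih =>
        have hk : q ≤ q + n := Nat.le_add_right _ _
        have hs := hstep (q + n) hk
        have hEn : 0 < E ^ n := pow_pos (by linarith) n
        constructor
        · rw [Nat.add_succ]; nlinarith [ih.1]
        · rw [Nat.add_succ, pow_succ]
          calc E ^ n * E ≤ d (q + n) * E := by nlinarith [ih.2]
          _ = E * d (q + n) := mul_comm _ _
          _ ≤ d (q + n + 1) := hs
    set k : ℕ := q + (q + 1) with hkdef
    have hkq : q ≤ k := Nat.le_add_right _ _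
    have hub0 := (hb k hkq).2
    rw [if_neg (lt_irrefl 0)] at hub0
    have hlb := (key2 (q + 1)).2
    have hexp : E ^ (q + 1) = Real.exp ((q + 1 : ℕ) * (2 * τ)) := by
      rw [hE, ← Real.exp_nat_mul]
    have hlt : Real.exp (τ * (k : ℝ)) < Real.exp ((q + 1 : ℕ) * (2 * τ)) := by
      apply Real.exp_lt_exp.2
      have : (k : ℝ) = 2 * q + 1 := by simp [hkdef]; push_cast; ring
      rw [this]
      push_cast
      nlinarith [hq, (Nat.one_le_cast.2 hq : (1:ℝ) ≤ q)]
    have hak : d k ≤ a k := by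
      simp only [hd]
      have : (0:ℝ) ≤ k := Nat.cast_nonneg _
      linarith
    rw [hexp] at hlb
    linarith
end

section
/- Let Ω ⊆ ℝⁿ be open, v : Ω → [0, ∞) integrable, and φ a gauge function. Let E ⊆ Ω be a set such that for every x ∈ E, limsup_{r→0⁺} (φ(2r))^{−1} ∫_{B(x,r)} v dy > 1. Then there exists a constant C = C(n) such that for every open set U with E ⊆ U ⊆ Ω, the Hausdorff measure H^φ(E) ≤ C ∫_U v dy. -/
open MeasureTheory Metric Filter
open scoped ENNReal NNReal

/-- A gauge function: nondecreasing, right-continuous, positive for positive arguments. -/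
def IsGauge (φ : ℝ → ℝ) : Prop :=
  Monotone φ ∧ (∀ t : ℝ, 0 < t → 0 < φ t) ∧
    ∀ t : ℝ, 0 ≤ t → ContinuousWithinAt φ (Set.Ici t) t

/-- The Hausdorff measure associated with the gauge `φ`. -/
noncomputable def hausdorffGauge {X : Type*} [EMetricSpace X] [MeasurableSpace X]
    [BorelSpace X] (φ : ℝ → ℝ) : Measure X :=
  Measure.mkMetric (fun d => ENNReal.ofReal (φ d.toReal))

theorem stmt_4 (n : ℕ) (hn : 2 ≤ n) :
    ∃ C : ℝ, 0 < C ∧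
      ∀ (Ω : Set (EuclideanSpace ℝ (Fin n))), IsOpen Ω →
      ∀ (v : EuclideanSpace ℝ (Fin n) → ℝ), (∀ x, 0 ≤ v x) → IntegrableOn v Ω volume →
      ∀ (φ : ℝ → ℝ), IsGauge φ →
      ∀ (E : Set (EuclideanSpace ℝ (Fin n))), E ⊆ Ω →
        (∀ x ∈ E, 1 < Filter.limsup
            (fun r : ℝ => (∫ y in ball x r, v y) / φ (2 * r))
            (nhdsWithin 0 (Set.Ioi 0))) →
        ∀ U : Set (EuclideanSpace ℝ (Fin n)), IsOpen U → E ⊆ U → U ⊆ Ω →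
          hausdorffGauge φ E ≤ ENNReal.ofReal (C * ∫ y in U, v y) := by
  refine ⟨1, one_pos, ?_⟩
  intro Ω hΩ v hv hvint φ hφ E hEΩ hlimsup U hUopen hEU hUΩ
  obtain ⟨hmono, hpos, -⟩ := hφ
  set μ : Measure (EuclideanSpace ℝ (Fin n)) := (volume.restrict U).withDensity (fun x => ENNReal.ofReal (v x)) with hμdef
  have hvU : IntegrableOn v U volume := hvint.mono_set hUΩ
  have hμuniv : μ Set.univ = ENNReal.ofReal (∫ y in U, v y) := by
    rw [hμdef, withDensity_apply _ MeasurableSet.univ, Measure.restrict_univ,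
      ← ofReal_integral_eq_lintegral_ofReal hvU (Filter.Eventually.of_forall fun y => hv y)]
  haveI : IsFiniteMeasure μ := ⟨by rw [hμuniv]; exact ENNReal.ofReal_lt_top⟩
  rw [one_mul]
  -- it suffices to prove the bound up to ε
  refine ENNReal.le_of_forall_pos_le_add fun ε hε _ => ?_
  -- for each k, construct a covering by small balls via the Besicovitch covering theorem
  have key : ∀ k : ℕ, ∃ (t : Set (EuclideanSpace ℝ (Fin n))) (rad : EuclideanSpace ℝ (Fin n) → ℝ), t.Countable ∧
      (∀ x ∈ t, 0 < rad x ∧ rad x < 1 / (k + 1) ∧ ball x (rad x) ⊆ U ∧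
        φ (2 * rad x) < ∫ y in ball x (rad x), v y) ∧
      (E ⊆ ⋃ x ∈ t, closedBall x (rad x)) ∧
      (∑' x : t, μ (closedBall x (rad x))) ≤ μ E + ε := by
    intro k
    set f : EuclideanSpace ℝ (Fin n) → Set ℝ := fun x => {r | 0 < r ∧ r < 1 / (k + 1) ∧ ball x r ⊆ U ∧
      φ (2 * r) < ∫ y in ball x r, v y} with hfdef
    have hf : ∀ x ∈ E, ∀ δ > 0, (f x ∩ Set.Ioo 0 δ).Nonempty := by
      intro x hx δ hδ
      obtain ⟨R, hR, hRU⟩ : ∃ R > 0, ball x R ⊆ U :=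
        Metric.mem_nhds_iff.1 (hUopen.mem_nhds (hEU hx))
      have hco : IsCoboundedUnder (· ≤ ·) (nhdsWithin (0:ℝ) (Set.Ioi 0))
          (fun r : ℝ => (∫ y in ball x r, v y) / φ (2 * r)) := by
        refine IsCoboundedUnder.of_frequently_ge (a := 0) ?_
        refine Eventually.frequently ?_
        filter_upwards [self_mem_nhdsWithin] with r (hr : r ∈ Set.Ioi 0)
        exact div_nonneg (integral_nonneg fun y => hv y) (hpos _ (by linarith [Set.mem_Ioi.1 hr])).le
      have freq := frequently_lt_of_lt_limsup hco (hlimsup x hx)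
      have hmin : (0:ℝ) < min δ (min (1 / (k + 1)) R) := by positivity
      have hev : Set.Ioo (0:ℝ) (min δ (min (1 / (k + 1)) R)) ∈ nhdsWithin (0:ℝ) (Set.Ioi 0) :=
        Ioo_mem_nhdsGT_of_mem ⟨le_refl 0, hmin⟩
      obtain ⟨r, hgr, hr0, hrlt⟩ := (freq.and_eventually (eventually_mem_set.2 hev)).exists
      have hr0' : 0 < r := hr0
      have hφpos : 0 < φ (2 * r) := hpos _ (by linarith)
      have hint : φ (2 * r) < ∫ y in ball x r, v y := by
        have := (lt_div_iff₀ hφpos).1 hgr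
        linarith [this]
      refine ⟨r, ⟨hr0', lt_of_lt_of_le hrlt (le_trans (min_le_right _ _) (min_le_left _ _)),
        ?_, hint⟩, hr0', lt_of_lt_of_le hrlt (min_le_left _ _)⟩
      exact (ball_subset_ball (le_of_lt (lt_of_lt_of_le hrlt
        (le_trans (min_le_right _ _) (min_le_right _ _))))).trans hRU
    obtain ⟨t, rad, tcount, tE, hrad, hcov, hsum⟩ :=
      Besicovitch.exists_closedBall_covering_tsum_measure_le μ
        (ε := (ε : ℝ≥0∞)) (by exact_mod_cast hε.ne') f E hf
    exact ⟨t, rad, tcount, fun x hx => hrad x hx, hcov, hsum⟩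
  choose T rad Tcount hrad hcov hsum using key
  haveI : ∀ k : ℕ, Countable ↥(T k) := fun k => (Tcount k).to_subtype
  -- bound each ball's gauge-mass by its μ-measure
  have ball_bound : ∀ (k : ℕ) (x : EuclideanSpace ℝ (Fin n)), x ∈ T k →
      ENNReal.ofReal (φ (EMetric.diam (closedBall x (rad k x))).toReal)
        ≤ μ (closedBall x (rad k x)) := by
    intro k x hx
    obtain ⟨hr0, hrk, hbU, hint⟩ := hrad k x hx
    have h1 : (EMetric.diam (closedBall x (rad k x))).toReal ≤ 2 * rad k x := by
      simpa [Metric.diam, EMetric.diam] using Metric.diam_closedBall (x := x) hr0.le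
    have h2 : φ (EMetric.diam (closedBall x (rad k x))).toReal ≤ φ (2 * rad k x) := hmono h1
    have h3 : μ (ball x (rad k x)) = ∫⁻ y in ball x (rad k x), ENNReal.ofReal (v y) ∂volume := by
      rw [hμdef, withDensity_apply _ measurableSet_ball, Measure.restrict_restrict
        measurableSet_ball, Set.inter_eq_self_of_subset_left hbU]
    have h4 : ENNReal.ofReal (∫ y in ball x (rad k x), v y) = μ (ball x (rad k x)) := by
      rw [h3, ofReal_integral_eq_lintegral_ofReal (hvU.mono_set hbU)
        (Filter.Eventually.of_forall fun y => hv y)]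
    calc ENNReal.ofReal (φ (EMetric.diam (closedBall x (rad k x))).toReal)
        ≤ ENNReal.ofReal (φ (2 * rad k x)) := ENNReal.ofReal_le_ofReal h2
      _ ≤ ENNReal.ofReal (∫ y in ball x (rad k x), v y) := ENNReal.ofReal_le_ofReal hint.le
      _ = μ (ball x (rad k x)) := h4
      _ ≤ μ (closedBall x (rad k x)) := measure_mono ball_subset_closedBall
  -- apply the covering bound for mkMetric
  have main : hausdorffGauge φ E ≤
      Filter.liminf (fun k : ℕ => ∑' i : ↥(T k),
        ENNReal.ofReal (φ (EMetric.diam (closedBall (i : EuclideanSpace ℝ (Fin n)) (rad k i))).toReal)) atTop := by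
    have hdiam : ∀ k : ℕ, ∀ i : ↥(T k),
        EMetric.diam (closedBall (i : EuclideanSpace ℝ (Fin n)) (rad k i)) ≤ ENNReal.ofReal (2 / (k + 1)) := by
      intro k i
      obtain ⟨hr0, hrk, -, -⟩ := hrad k i i.2
      calc EMetric.diam (closedBall (i : EuclideanSpace ℝ (Fin n)) (rad k i))
          ≤ EMetric.diam (EMetric.closedBall (i : EuclideanSpace ℝ (Fin n)) (ENNReal.ofReal (rad k i))) := by
            simp [EMetric.closedBall, EMetric.diam, Metric.emetric_closedBall hr0.le]
        _ ≤ 2 * ENNReal.ofReal (rad k i) := EMetric.diam_closedBall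
        _ ≤ ENNReal.ofReal (2 / (k + 1)) := by
            rw [← ENNReal.ofReal_ofNat, ← ENNReal.ofReal_mul (by norm_num)]
            exact ENNReal.ofReal_le_ofReal (by rw [div_eq_mul_one_div (2:ℝ)]; gcongr)
    have htend : Filter.Tendsto (fun k : ℕ => ENNReal.ofReal (2 / (k + 1))) atTop (nhds 0) := by
      rw [show (0 : ENNReal) = ENNReal.ofReal 0 by simp]
      apply ENNReal.tendsto_ofReal
      have : Filter.Tendsto (fun k : ℕ => 2 * (1 / ((k:ℝ) + 1))) atTop (nhds (2 * 0)) :=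
        tendsto_const_nhds.mul tendsto_one_div_add_atTop_nhds_zero_nat
      simpa [mul_one_div, div_eq_mul_inv] using this
    have := Measure.mkMetric_le_liminf_tsum  E
      (fun k : ℕ => ENNReal.ofReal (2 / (k + 1))) htend
      (fun k (i : ↥(T k)) => closedBall (i : EuclideanSpace ℝ (Fin n)) (rad k i))
      (Filter.Eventually.of_forall fun k => hdiam k)
      (Filter.Eventually.of_forall fun k => by
        intro x hx
        obtain ⟨y, hyT, hy⟩ := Set.mem_iUnion₂.1 (hcov k hx)
        exact Set.mem_iUnion.2 ⟨⟨y, hyT⟩, hy⟩)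
      (fun d => ENNReal.ofReal (φ d.toReal))
    exact this
  refine main.trans ?_
  have bound : ∀ k : ℕ, (∑' i : ↥(T k),
      ENNReal.ofReal (φ (EMetric.diam (closedBall (i : EuclideanSpace ℝ (Fin n)) (rad k i))).toReal))
        ≤ ENNReal.ofReal (∫ y in U, v y) + ε := by
    intro k
    calc (∑' i : ↥(T k), ENNReal.ofReal (φ (EMetric.diam (closedBall (i : EuclideanSpace ℝ (Fin n)) (rad k i))).toReal))
        ≤ ∑' i : ↥(T k), μ (closedBall (i : EuclideanSpace ℝ (Fin n)) (rad k i)) :=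
          ENNReal.tsum_le_tsum fun i => ball_bound k i i.2
      _ ≤ μ E + ε := hsum k
      _ ≤ ENNReal.ofReal (∫ y in U, v y) + ε := by
          gcongr
          rw [← hμuniv]; exact measure_mono (Set.subset_univ E)
  exact liminf_le_of_frequently_le' (Frequently.of_forall bound)
end

section
/- Let Ω ⊆ ℝⁿ be open, v : Ω → [0, ∞) integrable, φ a gauge function, and E ⊆ Ω a set of n-dimensional Lebesgue measure zero such that for every x ∈ E, limsup_{r→0⁺} (φ(2r))^{−1} ∫_{B(x,r)} v dy > 1. Then H^φ(E) = 0. -/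
open MeasureTheory Metric Filter

theorem stmt_5 (n : ℕ) (hn : 2 ≤ n)
    (Ω : Set (EuclideanSpace ℝ (Fin n))) (hΩ : IsOpen Ω)
    (v : EuclideanSpace ℝ (Fin n) → ℝ) (hv : ∀ x, 0 ≤ v x)
    (hvint : IntegrableOn v Ω volume)
    (φ : ℝ → ℝ) (hφ : IsGauge φ)
    (E : Set (EuclideanSpace ℝ (Fin n))) (hEΩ : E ⊆ Ω)
    (hE0 : volume E = 0)
    (hlim : ∀ x ∈ E, 1 < Filter.limsup
        (fun r : ℝ => (∫ y in ball x r, v y) / φ (2 * r))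
        (nhdsWithin 0 (Set.Ioi 0))) :
    hausdorffGauge φ E = 0 := by
  obtain ⟨hφmono, hφpos, -⟩ := hφ
  let X := EuclideanSpace ℝ (Fin n)
  set μ : Measure (EuclideanSpace ℝ (Fin n)) := (volume.restrict Ω).withDensity (fun y => ENNReal.ofReal (v y)) with hμdef
  -- μ is a finite measure
  haveI hμfin : IsFiniteMeasure μ := by
    constructor
    rw [hμdef, withDensity_apply _ MeasurableSet.univ, Measure.restrict_univ]
    have h2 := hvint.2
    rw [HasFiniteIntegral] at h2
    calc ∫⁻ y, ENNReal.ofReal (v y) ∂(volume.restrict Ω)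
        = ∫⁻ y, (‖v y‖₊ : ENNReal) ∂(volume.restrict Ω) :=
          lintegral_congr fun y => (Real.enorm_eq_ofReal (hv y)).symm
      _ < ⊤ := h2
  have hμE : μ E = 0 := by
    have h1 : μ ≪ volume :=
      (withDensity_absolutelyContinuous _ _).trans
        (Measure.absolutelyContinuous_of_le Measure.restrict_le_self)
    exact h1 hE0
  -- the key covering lemma
  have key : ∀ ε : ENNReal, 0 < ε → ∀ δ : ℝ, 0 < δ →
      ∃ (t : Set X) (r : X → ℝ), t.Countable ∧
        (∀ x ∈ t, 0 < r x ∧ r x < δ) ∧ (E ⊆ ⋃ x ∈ t, closedBall x (r x)) ∧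
        (∑' x : t, ENNReal.ofReal (φ (2 * r x))) ≤ ε := by
    intro ε hε δ hδ
    set f : X → Set ℝ := fun x =>
      {ρ | 0 < ρ ∧ ρ < δ ∧ ball x ρ ⊆ Ω ∧ φ (2 * ρ) < ∫ y in ball x ρ, v y} with hfdef
    have hf : ∀ x ∈ E, ∀ δ' > 0, (f x ∩ Set.Ioo 0 δ').Nonempty := by
      intro x hx δ' hδ'
      obtain ⟨R, hR, hRΩ⟩ : ∃ R > 0, ball x R ⊆ Ω := Metric.isOpen_iff.1 hΩ x (hEΩ hx)
      have hcob : IsCoboundedUnder (· ≤ ·) (nhdsWithin (0:ℝ) (Set.Ioi 0))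
          (fun r : ℝ => (∫ y in ball x r, v y) / φ (2 * r)) := by
        refine isCoboundedUnder_le_of_eventually_le _ (x := 0) ?_
        filter_upwards [self_mem_nhdsWithin] with ρ hρ
        have h0 : (0:ℝ) < φ (2 * ρ) := hφpos _ (by linarith [Set.mem_Ioi.1 hρ])
        exact div_nonneg (integral_nonneg fun y => hv y) h0.le
      have hfreq := frequently_lt_of_lt_limsup hcob (hlim x hx)
      have hmem : Set.Ioo (0:ℝ) (min δ (min δ' R)) ∈ nhdsWithin (0:ℝ) (Set.Ioi 0) :=
        Ioo_mem_nhdsGT_of_mem ⟨le_refl _, by positivity⟩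
      obtain ⟨ρ, hρ1, hρ2⟩ := (hfreq.and_eventually (eventually_of_mem hmem fun ρ hρ => hρ)).exists
      obtain ⟨hρ0, hρlt⟩ := hρ2
      have hρδ : ρ < δ := lt_of_lt_of_le hρlt (min_le_left _ _)
      have hρδ' : ρ < δ' := lt_of_lt_of_le hρlt ((min_le_right _ _).trans (min_le_left _ _))
      have hρR : ρ < R := lt_of_lt_of_le hρlt ((min_le_right _ _).trans (min_le_right _ _))
      have hφρ : (0:ℝ) < φ (2 * ρ) := hφpos _ (by linarith)
      refine ⟨ρ, ⟨hρ0, hρδ, (ball_subset_ball hρR.le).trans hRΩ, ?_⟩, hρ0, hρδ'⟩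
      have := (lt_div_iff₀ hφρ).1 hρ1
      linarith
    obtain ⟨t, r, tcount, tE, hrf, hcov, hsum⟩ :=
      Besicovitch.exists_closedBall_covering_tsum_measure_le μ hε.ne' f E hf
    refine ⟨t, r, tcount, fun x hx => ⟨(hrf x hx).1, (hrf x hx).2.1⟩, hcov, ?_⟩
    have hptwise : ∀ x : t, ENNReal.ofReal (φ (2 * r x)) ≤ μ (closedBall (x : X) (r x)) := by
      rintro ⟨x, hx⟩
      obtain ⟨hr0, hrδ, hrΩ, hrint⟩ := hrf x hx
      have hball : MeasurableSet (ball x (r x)) := measurableSet_ball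
      have h1 : ENNReal.ofReal (φ (2 * r x)) ≤ ENNReal.ofReal (∫ y in ball x (r x), v y) :=
        ENNReal.ofReal_le_ofReal hrint.le
      have hint : IntegrableOn v (ball x (r x)) volume := hvint.mono_set hrΩ
      have h2 : ENNReal.ofReal (∫ y in ball x (r x), v y)
          = ∫⁻ y in ball x (r x), ENNReal.ofReal (v y) ∂volume :=
        ofReal_integral_eq_lintegral_ofReal hint (Filter.Eventually.of_forall fun y => by simpa using hv y)
      have h3 : μ (ball x (r x)) = ∫⁻ y in ball x (r x), ENNReal.ofReal (v y) ∂volume := by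
        rw [hμdef, withDensity_apply _ hball, Measure.restrict_restrict hball,
          Set.inter_eq_self_of_subset_left hrΩ]
      calc ENNReal.ofReal (φ (2 * r x)) ≤ μ (ball x (r x)) := by rw [h3]; exact h1.trans h2.le
        _ ≤ μ (closedBall x (r x)) := measure_mono ball_subset_closedBall
    calc (∑' x : t, ENNReal.ofReal (φ (2 * r x)))
        ≤ ∑' x : t, μ (closedBall (x : X) (r x)) := ENNReal.tsum_le_tsum hptwise
      _ ≤ μ E + ε := hsum
      _ = ε := by rw [hμE, zero_add]
  -- conclude: hausdorffGauge φ E ≤ ε for every ε > 0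
  refine le_antisymm (ENNReal.le_of_forall_pos_le_add fun ε hε _ => ?_) zero_le
  rw [zero_add]
  have hεpos : (0:ENNReal) < ε := by exact_mod_cast hε
  choose t r tc hr hcov hsum using fun k : ℕ =>
    key ε hεpos (1 / ((k:ℝ) + 1)) (by positivity)
  haveI : ∀ k : ℕ, Countable (t k) := fun k => (tc k).to_subtype
  have hdiam : ∀ (k : ℕ) (i : t k),
      EMetric.diam (closedBall (i : EuclideanSpace ℝ (Fin n)) (r k i))
        ≤ 2 * ENNReal.ofReal (1 / ((k:ℝ) + 1)) := by
    rintro k ⟨x, hx⟩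
    obtain ⟨h0, h1⟩ := hr k x hx
    calc EMetric.diam (closedBall x (r k x))
        = EMetric.diam (EMetric.closedBall x (ENNReal.ofReal (r k x))) := by
          exact congrArg _ (Metric.emetric_closedBall h0.le).symm
      _ ≤ 2 * ENNReal.ofReal (r k x) := EMetric.diam_closedBall
      _ ≤ 2 * ENNReal.ofReal (1 / ((k:ℝ) + 1)) :=
          mul_le_mul_right (ENNReal.ofReal_le_ofReal h1.le) 2
  have hmain := MeasureTheory.Measure.mkMetric_le_liminf_tsum
      (X := EuclideanSpace ℝ (Fin n)) E
      (l := atTop) (fun k : ℕ => 2 * ENNReal.ofReal (1 / ((k:ℝ) + 1)))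
      (by
        have h1 : Tendsto (fun k : ℕ => ENNReal.ofReal (1 / ((k:ℝ) + 1))) atTop
            (nhds (ENNReal.ofReal 0)) :=
          (ENNReal.continuous_ofReal.tendsto 0).comp tendsto_one_div_add_atTop_nhds_zero_nat
        rw [ENNReal.ofReal_zero] at h1
        have h2 := ENNReal.Tendsto.const_mul (a := 2) h1 (Or.inr ENNReal.ofNat_ne_top)
        simpa using h2)
      (fun k (i : t k) => closedBall (i : EuclideanSpace ℝ (Fin n)) (r k i))
      (Filter.Eventually.of_forall hdiam)
      (Filter.Eventually.of_forall fun k => by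
        simpa [Set.iUnion_coe_set] using hcov k)
      (fun d => ENNReal.ofReal (φ d.toReal))
  have hterm : ∀ k : ℕ,
      (∑' i : t k, ENNReal.ofReal
        (φ (EMetric.diam (closedBall (i : EuclideanSpace ℝ (Fin n)) (r k i))).toReal)) ≤ ε := by
    intro k
    refine le_trans (ENNReal.tsum_le_tsum fun i => ?_) (hsum k)
    obtain ⟨x, hx⟩ := i
    obtain ⟨h0, h1⟩ := hr k x hx
    refine ENNReal.ofReal_le_ofReal (hφmono ?_)
    refine ENNReal.toReal_le_of_le_ofReal (by linarith) ?_
    calc EMetric.diam (closedBall x (r k x))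
        = EMetric.diam (EMetric.closedBall x (ENNReal.ofReal (r k x))) := by
          exact congrArg _ (Metric.emetric_closedBall h0.le).symm
      _ ≤ 2 * ENNReal.ofReal (r k x) := EMetric.diam_closedBall
      _ = ENNReal.ofReal (2 * r k x) := by
          rw [ENNReal.ofReal_mul (by norm_num : (0:ℝ) ≤ 2), ENNReal.ofReal_ofNat]
  calc hausdorffGauge φ E
      ≤ liminf (fun k : ℕ => ∑' i : t k, ENNReal.ofReal
          (φ (EMetric.diam (closedBall (i : EuclideanSpace ℝ (Fin n)) (r k i))).toReal)) atTop := hmain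
    _ ≤ ε := liminf_le_of_frequently_le
        (Filter.Eventually.frequently (Filter.Eventually.of_forall hterm))
end

section
/- Fix 0 < α ≤ 1 and μ > 0, and define ψ(r) = exp(−μ·log^α(1/r)) and φ(r) = exp(−(n+1)μ·log^α(1/r)) for 0 < r < 1. Then there exists R₀ = R₀(α, μ) > 0 such that ψ(2r) − ψ(r) ≥ (φ(r))^{1/n} for all 0 < r < R₀. -/
open Real

theorem stmt_6 (n : ℕ) (hn : 2 ≤ n) (α μ : ℝ) (hα0 : 0 < α) (hα1 : α ≤ 1) (hμ : 0 < μ) :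
    ∃ R₀ : ℝ, 0 < R₀ ∧ ∀ r : ℝ, 0 < r → r < R₀ →
      Real.exp (-(μ * Real.log (1 / (2 * r)) ^ α)) - Real.exp (-(μ * Real.log (1 / r) ^ α))
        ≥ (Real.exp (-((n + 1 : ℝ) * μ * Real.log (1 / r) ^ α))) ^ ((1 : ℝ) / n) := by
  set c := Real.log 2 with hcdef
  have hc : 0 < c := Real.log_pos one_lt_two
  have hn0 : (0:ℝ) < n := by positivity
  have hK : 0 < μ * α * c := by positivity
  -- Tendsto of μ/n * L^α - log L to atTop
  have hten : Filter.Tendsto (fun L : ℝ => μ / n * L ^ α - Real.log L) Filter.atTop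
      Filter.atTop := by
    have h1 : Filter.Tendsto (fun L : ℝ => μ / (2 * n) * L ^ α) Filter.atTop Filter.atTop :=
      (tendsto_rpow_atTop hα0).const_mul_atTop (by positivity)
    refine Filter.tendsto_atTop_mono' _ ?_ h1
    have h2 := (isLittleO_log_rpow_atTop hα0).def (show (0:ℝ) < μ / (2 * n) by positivity)
    filter_upwards [h2, Filter.eventually_ge_atTop (1:ℝ)] with L hL hL1
    have hLα : ‖L ^ α‖ = L ^ α := by
      rw [Real.norm_eq_abs, abs_of_nonneg (Real.rpow_nonneg (by linarith) α)]
    rw [hLα] at hL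
    have : Real.log L ≤ μ / (2 * n) * L ^ α := (le_abs_self _).trans hL
    have hhalf : μ / n * L ^ α = μ / (2 * n) * L ^ α + μ / (2 * n) * L ^ α := by ring
    linarith
  have hev : ∀ᶠ L in Filter.atTop,
      Real.log L - μ / n * L ^ α ≤ Real.log (μ * α * c) ∧ c + 1 ≤ L := by
    refine Filter.Eventually.and ?_ (Filter.eventually_ge_atTop _)
    filter_upwards [hten.eventually_ge_atTop (- Real.log (μ * α * c))] with L h
    linarith
  obtain ⟨L₀, hL₀⟩ := Filter.eventually_atTop.mp hev
  refine ⟨Real.exp (-L₀), Real.exp_pos _, ?_⟩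
  intro r hr hrR
  set L := Real.log (1 / r) with hLdef
  have hLge : L₀ ≤ L := by
    have : Real.log r < Real.log (Real.exp (-L₀)) := Real.log_lt_log hr hrR
    rw [Real.log_exp] at this
    have : -L₀ ≥ Real.log r := this.le
    rw [hLdef, one_div, Real.log_inv]
    linarith
  obtain ⟨hP, hcL⟩ := hL₀ L hLge
  have hL1 : (1:ℝ) ≤ L := by linarith
  have hLpos : (0:ℝ) < L := by linarith
  have hLc : (0:ℝ) < L - c := by linarith
  -- rewrite log (1/(2r)) = L - c
  have hlog2r : Real.log (1 / (2 * r)) = L - c := by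
    rw [hLdef, one_div, one_div, mul_inv, Real.log_mul (by positivity) (by positivity),
      Real.log_inv, hcdef]
    ring
  rw [hlog2r]
  -- rewrite RHS
  have hrhs : (Real.exp (-((n + 1 : ℝ) * μ * L ^ α))) ^ ((1 : ℝ) / n)
      = Real.exp (-((n + 1 : ℝ) * μ * L ^ α) * (1 / n)) := (Real.exp_mul _ _).symm
  rw [hrhs]
  set A := μ * L ^ α with hAdef
  set B := μ * (L - c) ^ α with hBdef
  have hLα0 : (0:ℝ) ≤ L ^ α := Real.rpow_nonneg hLpos.le α
  have hLα1 : (1:ℝ) ≤ L ^ α := by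
    calc (1:ℝ) = (1:ℝ) ^ α := (Real.one_rpow α).symm
    _ ≤ L ^ α := Real.rpow_le_rpow zero_le_one hL1 hα0.le
  -- Step 1: A - B ≥ μ * α * c * (L^α / L)
  have hcLle : c / L ≤ 1 := (div_le_one hLpos).mpr (by linarith)
  have hmul : L - c = L * (1 - c / L) := by field_simp
  have hbern : (1 - c / L) ^ α ≤ 1 - α * (c / L) := by
    have := rpow_one_add_le_one_add_mul_self (s := -(c / L)) (by linarith) hα0.le hα1
    simpa [sub_eq_add_neg, mul_neg] using this
  have hsplit : (L - c) ^ α = L ^ α * (1 - c / L) ^ α := by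
    rw [hmul, Real.mul_rpow hLpos.le (by linarith)]
  have h1 : A - B ≥ μ * α * c * (L ^ α / L) := by
    have hB' : (L - c) ^ α ≤ L ^ α * (1 - α * (c / L)) := by
      rw [hsplit]
      exact mul_le_mul_of_nonneg_left hbern hLα0
    have : L ^ α * (α * (c / L)) = α * c * (L ^ α / L) := by ring
    rw [hAdef, hBdef]
    nlinarith [hB', hLα0]
  -- Step 2: exp(-B) - exp(-A) ≥ exp(-A) * (A - B)
  have h2 : Real.exp (-B) - Real.exp (-A) ≥ Real.exp (-A) * (A - B) := by
    have hEB : Real.exp (-B) = Real.exp (-A) * Real.exp (A - B) := by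
      rw [← Real.exp_add]; ring_nf
    have hexp : Real.exp (A - B) ≥ 1 + (A - B) := by
      have := Real.add_one_le_exp (A - B); linarith
    have := mul_le_mul_of_nonneg_left hexp (Real.exp_pos (-A)).le
    rw [hEB]
    nlinarith [Real.exp_pos (-A)]
  -- Step 3: μ * α * c * (L^α / L) ≥ exp(-(A * (1/n)))
  have h3 : μ * α * c * (L ^ α / L) ≥ Real.exp (-(A * (1 / n))) := by
    have hlogL : Real.log L ≤ μ / n * L ^ α + Real.log (μ * α * c) := by linarith
    have hexp : L ≤ Real.exp (μ / n * L ^ α) * (μ * α * c) := by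
      calc L = Real.exp (Real.log L) := (Real.exp_log hLpos).symm
      _ ≤ Real.exp (μ / n * L ^ α + Real.log (μ * α * c)) := Real.exp_le_exp.mpr hlogL
      _ = Real.exp (μ / n * L ^ α) * (μ * α * c) := by rw [Real.exp_add, Real.exp_log hK]
    have hstep : μ * α * c ≥ L * Real.exp (-(A * (1 / n))) := by
      have hAn : -(A * (1 / n)) = -(μ / n * L ^ α) := by rw [hAdef]; field_simp
      rw [hAn]
      have hmm := mul_le_mul_of_nonneg_right hexp (Real.exp_pos (-(μ / n * L ^ α))).le
      have hxx : Real.exp (μ / n * L ^ α) * Real.exp (-(μ / n * L ^ α)) = 1 := by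
        rw [← Real.exp_add]; simp
      calc L * Real.exp (-(μ / n * L ^ α))
          ≤ Real.exp (μ / n * L ^ α) * (μ * α * c) * Real.exp (-(μ / n * L ^ α)) := hmm
        _ = μ * α * c * (Real.exp (μ / n * L ^ α) * Real.exp (-(μ / n * L ^ α))) := by ring
        _ = μ * α * c := by rw [hxx, mul_one]
    calc Real.exp (-(A * (1 / n))) = 1 * Real.exp (-(A * (1 / n))) := (one_mul _).symm
    _ ≤ (L ^ α / L) * (L * Real.exp (-(A * (1 / n)))) := by
        rw [div_mul_eq_mul_div, mul_div_assoc, mul_comm L, mul_div_assoc,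
          div_self hLpos.ne']
        rw [mul_one]
        exact mul_le_mul_of_nonneg_right hLα1 (Real.exp_pos _).le
    _ ≤ (L ^ α / L) * (μ * α * c) := by
        refine mul_le_mul_of_nonneg_left hstep (by positivity)
    _ = μ * α * c * (L ^ α / L) := by ring
  -- combine
  have hfin : -((n + 1 : ℝ) * μ * L ^ α) * (1 / n) = -A + -(A * (1 / n)) := by
    rw [hAdef]; field_simp; ring
  calc Real.exp (-((n + 1 : ℝ) * μ * L ^ α) * (1 / n))
      = Real.exp (-A) * Real.exp (-(A * (1 / n))) := by rw [← Real.exp_add, hfin]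
    _ ≤ Real.exp (-A) * (μ * α * c * (L ^ α / L)) :=
        mul_le_mul_of_nonneg_left h3 (Real.exp_pos _).le
    _ ≤ Real.exp (-A) * (A - B) := mul_le_mul_of_nonneg_left h1 (Real.exp_pos _).le
    _ ≤ Real.exp (-B) - Real.exp (-A) := h2
end

section
/- Let Ω ⊆ ℝⁿ be open and f : Ω → ℝᵈ continuous. Suppose φ is a gauge function and K' ⊆ Ω is a compact set with H^φ(K') = 0 and H^n(f(K')) > 0, and suppose K' ⊆ I for a closed dyadic cube I such that H^n(f(∂J ∩ K')) = 0 for every dyadic subcube J of I. Then there exists a compact, perfect, totally disconnected set K ⊆ K' with H^φ(K) = 0 and H^n(f(K)) > 0. -/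
open MeasureTheory Metric

/-- The closed dyadic cube in `ℝⁿ` of generation `k` with corner index `a`:
its side length is `2^{-k}`. -/
def dyadicCube (n : ℕ) (k : ℤ) (a : Fin n → ℤ) : Set (EuclideanSpace ℝ (Fin n)) :=
  {x | ∀ i : Fin n, (a i : ℝ) * (2 : ℝ) ^ (-k) ≤ x i ∧ x i ≤ ((a i : ℝ) + 1) * (2 : ℝ) ^ (-k)}

open ENNReal NNReal

noncomputable section HContent

variable {X : Type*} [EMetricSpace X]

/-- The basic gauge set-function for Hausdorff content/measure of dimension `d`. -/
noncomputable def mfun (d : ℝ) (s : Set X) : ℝ≥0∞ :=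
  ⨆ _ : s.Nonempty, EMetric.diam s ^ d

lemma mfun_empty (d : ℝ) : mfun d (∅ : Set X) = 0 := by
  simp [mfun]

lemma mfun_le (d : ℝ) (s : Set X) : mfun d s ≤ EMetric.diam s ^ d :=
  iSup_le fun _ => le_rfl

lemma mfun_eq {d : ℝ} (hd : 0 < d) (s : Set X) : mfun d s = EMetric.diam s ^ d := by
  rcases s.eq_empty_or_nonempty with rfl | h
  · simp [mfun, show EMetric.diam (∅ : Set X) = 0 from Metric.ediam_empty, ENNReal.zero_rpow_of_pos hd]
  · simp [mfun, h]

/-- Hausdorff content of dimension `d`. -/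
noncomputable def hCont (d : ℝ) : MeasureTheory.OuterMeasure X :=
  MeasureTheory.OuterMeasure.ofFunction (mfun d) (mfun_empty d)

lemma hCont_le_tsum (d : ℝ) (s : Set X) (t : ℕ → Set X) (h : s ⊆ ⋃ i, t i) :
    hCont d s ≤ ∑' i, mfun d (t i) := by
  refine le_trans (measure_mono h) (le_trans (measure_iUnion_le t) ?_)
  exact ENNReal.tsum_le_tsum fun i => MeasureTheory.OuterMeasure.ofFunction_le _

lemma hCont_le_hausdorffMeasure [MeasurableSpace X] [BorelSpace X] (d : ℝ) (s : Set X) :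
    hCont d s ≤ μH[d] s := by
  rw [MeasureTheory.Measure.hausdorffMeasure_apply]
  refine le_trans ?_ (le_iSup₂ (1 : ℝ≥0∞) zero_lt_one)
  exact le_iInf₂ fun t ht => le_iInf fun _ => hCont_le_tsum d s t ht

lemma hausdorffMeasure_eq_zero_of_hCont [MeasurableSpace X] [BorelSpace X] {d : ℝ}
    (hd : 0 < d) {s : Set X} (h : hCont d s = 0) : μH[d] s = 0 := by
  rw [← nonpos_iff_eq_zero, MeasureTheory.Measure.hausdorffMeasure_apply]
  refine iSup₂_le fun r hr => ?_
  refine ENNReal.le_of_forall_pos_le_add fun ε hε _ => ?_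
  set ε' : ℝ≥0∞ := min (ε : ℝ≥0∞) (r ^ d) with hε'def
  have hε' : 0 < ε' := by
    refine lt_min (by exact_mod_cast hε) ?_
    rw [pos_iff_ne_zero]
    rw [Ne, ENNReal.rpow_eq_zero_iff_of_pos hd]
    exact hr.ne'
  have hlt : hCont d s < ε' := by rw [h]; exact hε'
  rw [hCont, MeasureTheory.OuterMeasure.ofFunction_apply] at hlt
  obtain ⟨t, ht⟩ := iInf_lt_iff.mp hlt
  obtain ⟨hst, htsum⟩ := iInf_lt_iff.mp ht
  have hdiam : ∀ i, EMetric.diam (t i) ≤ r := by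
    intro i
    have h1 : EMetric.diam (t i) ^ d < r ^ d := by
      calc EMetric.diam (t i) ^ d = mfun d (t i) := (mfun_eq hd _).symm
        _ ≤ ∑' j, mfun d (t j) := ENNReal.le_tsum i
        _ < ε' := htsum
        _ ≤ r ^ d := min_le_right _ _
    exact ((ENNReal.rpow_lt_rpow_iff hd).mp h1).le
  refine le_trans (le_trans (iInf₂_le t hst) (iInf_le _ hdiam)) ?_
  calc ∑' i, mfun d (t i) ≤ ε' := htsum.le
    _ ≤ 0 + ε := by rw [zero_add]; exact min_le_left _ _

lemma add_rpow_le {d : ℝ} (hd : 0 ≤ d) (x y : ℝ≥0∞) :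
    (x + y) ^ d ≤ 2 ^ d * (x ^ d + y ^ d) := by
  calc (x + y) ^ d ≤ (2 * max x y) ^ d := by
        refine ENNReal.rpow_le_rpow ?_ hd
        rw [two_mul]
        exact add_le_add (le_max_left _ _) (le_max_right _ _)
    _ = 2 ^ d * max x y ^ d := ENNReal.mul_rpow_of_nonneg _ _ hd
    _ ≤ 2 ^ d * (x ^ d + y ^ d) := by
        refine mul_le_mul_right ?_ _
        rcases max_cases x y with ⟨h, _⟩ | ⟨h, _⟩ <;> rw [h]
        · exact le_add_right le_rfl
        · exact le_add_left le_rfl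

lemma exists_isOpen_hCont_lt {d : ℝ} (hd : 0 < d) (A : Set X)
    (h : hCont d A = 0) {ε : ℝ≥0∞} (hε0 : ε ≠ 0) (hεT : ε ≠ ∞) :
    ∃ U : Set X, IsOpen U ∧ A ⊆ U ∧ hCont d U < ε := by
  have h2d0 : (2 : ℝ≥0∞) ^ d ≠ 0 := by
    rw [Ne, ENNReal.rpow_eq_zero_iff_of_pos hd]; norm_num
  have h2dT : (2 : ℝ≥0∞) ^ d ≠ ∞ := by
    rw [Ne, ENNReal.rpow_eq_top_iff_of_pos hd]; norm_num
  set D : ℝ≥0∞ := 2 * 2 ^ d with hD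
  have hD0 : D ≠ 0 := mul_ne_zero (by norm_num) h2d0
  have hDT : D ≠ ∞ := ENNReal.mul_ne_top (by norm_num) h2dT
  set c : ℝ≥0∞ := ε / D with hc
  have hc0 : c ≠ 0 := by
    simp only [hc, Ne, ENNReal.div_eq_zero_iff, not_or]
    exact ⟨hε0, hDT⟩
  have hlt : hCont d A < c := by rw [h]; exact pos_iff_ne_zero.2 hc0
  rw [hCont, MeasureTheory.OuterMeasure.ofFunction_apply] at hlt
  obtain ⟨t, ht⟩ := iInf_lt_iff.mp hlt
  obtain ⟨hst, htsum⟩ := iInf_lt_iff.mp ht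
  obtain ⟨η, hη0, hηsum⟩ := ENNReal.exists_pos_sum_of_countable hc0 ℕ
  set δ : ℕ → ℝ≥0 := fun i => η i ^ (1 / d : ℝ) / 2 with hδdef
  have hδ0 : ∀ i, 0 < δ i := by
    intro i
    refine div_pos ?_ two_pos
    rw [pos_iff_ne_zero, Ne, NNReal.rpow_eq_zero_iff, not_and_or]
    exact Or.inl (hη0 i).ne'
  set U : Set X := ⋃ i, Metric.thickening (δ i) (t i) with hU
  refine ⟨U, isOpen_iUnion fun i => Metric.isOpen_thickening, ?_, ?_⟩
  · refine hst.trans (Set.iUnion_mono fun i => ?_)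
    exact Metric.self_subset_thickening (by exact_mod_cast hδ0 i) _
  · have h2δ : ∀ i, ((2 * δ i : ℝ≥0) : ℝ≥0∞) ^ d = (η i : ℝ≥0∞) := by
      intro i
      have : (2 : ℝ≥0) * δ i = η i ^ (1 / d : ℝ) := by
        rw [hδdef]; rw [mul_comm, div_mul_cancel₀]; norm_num
      rw [this, ← ENNReal.coe_rpow_of_nonneg _ hd.le,
        NNReal.rpow_self_rpow_inv hd.ne' (η i)]
    have key : ∀ i, hCont d (Metric.thickening (δ i) (t i)) ≤
        2 ^ d * (EMetric.diam (t i) ^ d + (η i : ℝ≥0∞)) := by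
      intro i
      calc hCont d (Metric.thickening (δ i) (t i)) ≤ mfun d _ :=
            MeasureTheory.OuterMeasure.ofFunction_le _
        _ ≤ EMetric.diam (Metric.thickening (δ i) (t i)) ^ d := mfun_le _ _
        _ ≤ (EMetric.diam (t i) + 2 * (δ i : ℝ≥0∞)) ^ d :=
            ENNReal.rpow_le_rpow (Metric.ediam_thickening_le _) hd.le
        _ ≤ 2 ^ d * (EMetric.diam (t i) ^ d + (2 * (δ i : ℝ≥0∞)) ^ d) := add_rpow_le hd.le _ _
        _ = 2 ^ d * (EMetric.diam (t i) ^ d + (η i : ℝ≥0∞)) := by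
            rw [← h2δ i]; push_cast; ring_nf
    calc hCont d U ≤ ∑' i, hCont d (Metric.thickening (δ i) (t i)) := measure_iUnion_le _
      _ ≤ ∑' i, 2 ^ d * (EMetric.diam (t i) ^ d + (η i : ℝ≥0∞)) :=
          ENNReal.tsum_le_tsum key
      _ = 2 ^ d * ((∑' i, EMetric.diam (t i) ^ d) + ∑' i, (η i : ℝ≥0∞)) := by
          rw [ENNReal.tsum_mul_left, ENNReal.tsum_add]
      _ < 2 ^ d * (c + c) := by
          rw [ENNReal.mul_lt_mul_iff_right h2d0 h2dT]
          refine ENNReal.add_lt_add ?_ hηsum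
          calc (∑' i, EMetric.diam (t i) ^ d) = ∑' i, mfun d (t i) := by
                refine tsum_congr fun i => (mfun_eq hd _).symm
            _ < c := htsum
      _ = D * c := by rw [hD]; ring
      _ = ε := ENNReal.mul_div_cancel hD0 hDT

lemma hCont_ne_zero_of_hausdorffMeasure [MeasurableSpace X] [BorelSpace X] {d : ℝ}
    (hd : 0 < d) {s : Set X} (h : 0 < μH[d] s) : hCont d s ≠ 0 := by
  intro h0
  exact h.ne' (hausdorffMeasure_eq_zero_of_hCont hd h0)

end HContent


lemma contCoord {n : ℕ} (i : Fin n) :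
    Continuous fun x : EuclideanSpace ℝ (Fin n) => x i :=
  (EuclideanSpace.proj (𝕜 := ℝ) i).continuous

lemma dyadicCube_isClosed (n : ℕ) (k : ℤ) (a : Fin n → ℤ) : IsClosed (dyadicCube n k a) := by
  have : dyadicCube n k a = ⋂ i : Fin n,
      ((fun x : EuclideanSpace ℝ (Fin n) => x i) ⁻¹'
        Set.Icc ((a i : ℝ) * 2 ^ (-k)) (((a i : ℝ) + 1) * 2 ^ (-k))) := by
    ext x
    simp [dyadicCube, Set.mem_iInter, Set.mem_Icc]
  rw [this]
  exact isClosed_iInter fun i => IsClosed.preimage (contCoord i) isClosed_Icc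

lemma sub_single_apply {n : ℕ} (x : EuclideanSpace ℝ (Fin n)) (i : Fin n) (c : ℝ) :
    (x - EuclideanSpace.single i c) i = x i - c := by
  simp [EuclideanSpace.single_apply]

lemma add_single_apply {n : ℕ} (x : EuclideanSpace ℝ (Fin n)) (i : Fin n) (c : ℝ) :
    (x + EuclideanSpace.single i c) i = x i + c := by
  simp [EuclideanSpace.single_apply]

lemma mem_frontier_dyadicCube {n : ℕ} {k : ℤ} {a : Fin n → ℤ}
    {x : EuclideanSpace ℝ (Fin n)} (hx : x ∈ dyadicCube n k a) (i : Fin n)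
    (hxi : x i = (a i : ℝ) * 2 ^ (-k) ∨ x i = ((a i : ℝ) + 1) * 2 ^ (-k)) :
    x ∈ frontier (dyadicCube n k a) := by
  rw [frontier, (dyadicCube_isClosed n k a).closure_eq]
  refine ⟨hx, fun hint => ?_⟩
  rw [mem_interior_iff_mem_nhds, Metric.mem_nhds_iff] at hint
  obtain ⟨ε, hε, hball⟩ := hint
  rcases hxi with h | h
  · have hy : x - EuclideanSpace.single i (ε / 2) ∈ dyadicCube n k a := by
      apply hball
      rw [Metric.mem_ball, dist_self_sub_left, EuclideanSpace.norm_single]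
      rw [Real.norm_eq_abs, abs_of_pos (by linarith)]
      linarith
    have := (hy i).1
    rw [sub_single_apply, h] at this
    linarith
  · have hy : x + EuclideanSpace.single i (ε / 2) ∈ dyadicCube n k a := by
      apply hball
      rw [Metric.mem_ball, dist_self_add_left, EuclideanSpace.norm_single]
      rw [Real.norm_eq_abs, abs_of_pos (by linarith)]
      linarith
    have := (hy i).2
    rw [add_single_apply, h] at this
    linarith

lemma strict_mem_dyadicCube {n : ℕ} {k : ℤ} {a : Fin n → ℤ}
    {x : EuclideanSpace ℝ (Fin n)} (hx : x ∈ dyadicCube n k a)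
    (hfr : x ∉ frontier (dyadicCube n k a)) :
    ∀ i, (a i : ℝ) * 2 ^ (-k) < x i ∧ x i < ((a i : ℝ) + 1) * 2 ^ (-k) := by
  intro i
  obtain ⟨h1, h2⟩ := hx i
  constructor
  · refine lt_of_le_of_ne h1 fun h => ?_
    exact hfr (mem_frontier_dyadicCube hx i (Or.inl h.symm))
  · refine lt_of_le_of_ne h2 fun h => ?_
    exact hfr (mem_frontier_dyadicCube hx i (Or.inr h))

lemma two_zpow_mul (s t : ℤ) : (2 : ℝ) ^ s * 2 ^ t = 2 ^ (s + t) :=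
  (zpow_add₀ two_ne_zero s t).symm

lemma exists_subcube {n : ℕ} {k k' : ℤ} {a : Fin n → ℤ} (hk : k ≤ k')
    {z : EuclideanSpace ℝ (Fin n)}
    (hz : ∀ j, (a j : ℝ) * 2 ^ (-k) < z j ∧ z j < ((a j : ℝ) + 1) * 2 ^ (-k))
    (i : Fin n) (m : ℤ) (hm : z i * 2 ^ (k' : ℤ) = (m : ℝ)) :
    ∃ a' : Fin n → ℤ, dyadicCube n k' a' ⊆ dyadicCube n k a ∧
      z ∈ frontier (dyadicCube n k' a') := by
  set e : ℕ := (k' - k).toNat with he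
  have hee : ((e : ℤ)) = k' - k := Int.toNat_of_nonneg (sub_nonneg.2 hk)
  have hpow : ((2 : ℝ) ^ (e : ℕ)) = (2 : ℝ) ^ (k' - k) := by
    rw [← hee, zpow_natCast]
  have hpos : (0 : ℝ) < 2 ^ (k' : ℤ) := zpow_pos two_pos _
  have hpos' : (0 : ℝ) < 2 ^ (-k' : ℤ) := zpow_pos two_pos _
  have hcancel : (2 : ℝ) ^ (k' : ℤ) * 2 ^ (-k' : ℤ) = 1 := by
    rw [two_zpow_mul, add_neg_cancel, zpow_zero]
  -- casts of corner integers
  have hcastA : ∀ b : ℤ, ((b * 2 ^ e : ℤ) : ℝ) = (b : ℝ) * 2 ^ (-k) * 2 ^ (k' : ℤ) := by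
    intro b
    push_cast
    rw [hpow, mul_assoc, two_zpow_mul]
    congr 2
    omega
  have hcastA' : ∀ b : ℤ, ((b * 2 ^ e : ℤ) : ℝ) * 2 ^ (-k' : ℤ) = (b : ℝ) * 2 ^ (-k) := by
    intro b
    rw [hcastA, mul_assoc, hcancel, mul_one]
  set a' : Fin n → ℤ := fun j => if j = i then m else ⌊z j * 2 ^ (k' : ℤ)⌋ with ha'
  -- integer bounds
  have hlowup : ∀ j, (a j * 2 ^ e : ℤ) ≤ a' j ∧ a' j + 1 ≤ (a j + 1) * 2 ^ e := by
    intro j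
    have h1 : ((a j * 2 ^ e : ℤ) : ℝ) < z j * 2 ^ (k' : ℤ) := by
      rw [hcastA]
      exact mul_lt_mul_of_pos_right (hz j).1 hpos
    have h2 : z j * 2 ^ (k' : ℤ) < (((a j + 1) * 2 ^ e : ℤ) : ℝ) := by
      rw [hcastA]
      refine mul_lt_mul_of_pos_right ?_ hpos
      have := (hz j).2
      push_cast
      linarith
    by_cases hj : j = i
    · subst hj
      simp only [ha', if_pos rfl]
      rw [hm] at h1 h2
      exact ⟨(Int.cast_lt.mp h1).le, Int.add_one_le_iff.2 (Int.cast_lt.mp h2)⟩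
    · simp only [ha', if_neg hj]
      refine ⟨Int.le_floor.2 h1.le, Int.add_one_le_iff.2 (Int.floor_lt.2 h2)⟩
  -- z is in the subcube, with i-th coordinate at the left endpoint
  have hzmem : ∀ j, (a' j : ℝ) * 2 ^ (-k' : ℤ) ≤ z j ∧ z j ≤ ((a' j : ℝ) + 1) * 2 ^ (-k' : ℤ) := by
    intro j
    have hzj : z j = z j * 2 ^ (k' : ℤ) * 2 ^ (-k' : ℤ) := by
      rw [mul_assoc, hcancel, mul_one]
    constructor
    · rw [hzj]
      refine mul_le_mul_of_nonneg_right ?_ hpos'.le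
      by_cases hj : j = i
      · subst hj; simp only [ha', if_pos rfl, hm, le_refl]
      · simp only [ha', if_neg hj]; exact Int.floor_le _
    · rw [hzj]
      refine mul_le_mul_of_nonneg_right ?_ hpos'.le
      by_cases hj : j = i
      · subst hj; simp only [ha', if_pos rfl, hm]; linarith
      · simp only [ha', if_neg hj]
        have := Int.lt_floor_add_one (z j * 2 ^ (k' : ℤ))
        push_cast at this ⊢
        linarith
  refine ⟨a', fun x hx j => ?_, ?_⟩
  · obtain ⟨hx1, hx2⟩ := hx j
    obtain ⟨hb1, hb2⟩ := hlowup j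
    constructor
    · calc (a j : ℝ) * 2 ^ (-k) = ((a j * 2 ^ e : ℤ) : ℝ) * 2 ^ (-k' : ℤ) := (hcastA' _).symm
        _ ≤ (a' j : ℝ) * 2 ^ (-k' : ℤ) :=
            mul_le_mul_of_nonneg_right (Int.cast_le.2 hb1) hpos'.le
        _ ≤ x j := hx1
    · calc x j ≤ ((a' j : ℝ) + 1) * 2 ^ (-k' : ℤ) := hx2
        _ ≤ (((a j + 1) * 2 ^ e : ℤ) : ℝ) * 2 ^ (-k' : ℤ) := by
            refine mul_le_mul_of_nonneg_right ?_ hpos'.le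
            exact_mod_cast Int.cast_le.2 hb2
        _ = ((a j : ℝ) + 1) * 2 ^ (-k) := by
            rw [hcastA']; push_cast; ring
  · refine mem_frontier_dyadicCube (fun j => hzmem j) i (Or.inl ?_)
    have : (a' i : ℝ) = m := by simp [ha']
    rw [this]
    have : z i = z i * 2 ^ (k' : ℤ) * 2 ^ (-k' : ℤ) := by rw [mul_assoc, hcancel, mul_one]
    rw [this, hm]

lemma isTotallyDisconnected_of_dyadicFree {n : ℕ} {k : ℤ}
    (S : Set (EuclideanSpace ℝ (Fin n)))
    (hS : ∀ z ∈ S, ∀ k' : ℤ, k ≤ k' → ∀ (i : Fin n) (m : ℤ),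
      z i * 2 ^ (k' : ℤ) ≠ (m : ℝ)) :
    IsTotallyDisconnected S := by
  intro t hts hpc x hx y hy
  by_contra hxy
  have hex : ∃ i, x i ≠ y i := by
    by_contra hc; push_neg at hc; exact hxy (PiLp.ext hc)
  obtain ⟨i, hne⟩ := hex
  set p := min (x i) (y i) with hp
  set q := max (x i) (y i) with hq
  have hpq : p < q := min_lt_max.2 hne
  obtain ⟨N, hN⟩ := exists_pow_lt_of_lt_one (sub_pos.2 hpq) (by norm_num : (1 : ℝ) / 2 < 1)
  set k' : ℤ := max k 0 + N with hk'
  have hkk' : k ≤ k' := le_trans (le_max_left _ _) (le_add_of_nonneg_right (by positivity))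
  have hsmall : (2 : ℝ) ^ (-k') < q - p := by
    have h1 : (2 : ℝ) ^ (-k') = 2 ^ (-max k 0) * 2 ^ (-(N : ℤ)) := by
      rw [two_zpow_mul]; congr 1; omega
    have h2 : (2 : ℝ) ^ (-max k 0) ≤ 1 := by
      apply zpow_le_one_of_nonpos₀ (by norm_num : (1:ℝ) ≤ 2)
      simp
    have h3 : (2 : ℝ) ^ (-(N : ℤ)) = (1 / 2) ^ N := by
      rw [zpow_neg, zpow_natCast, one_div, inv_pow]
    have h4 : (0 : ℝ) < 2 ^ (-(N : ℤ)) := zpow_pos two_pos _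
    calc (2 : ℝ) ^ (-k') ≤ 2 ^ (-(N : ℤ)) := by
          rw [h1]; nlinarith
      _ = (1 / 2) ^ N := h3
      _ < q - p := hN
  have hposk : (0 : ℝ) < 2 ^ (k' : ℤ) := zpow_pos two_pos _
  have hposk' : (0 : ℝ) < 2 ^ (-k' : ℤ) := zpow_pos two_pos _
  have hcancel : (2 : ℝ) ^ (k' : ℤ) * 2 ^ (-k' : ℤ) = 1 := by
    rw [two_zpow_mul, add_neg_cancel, zpow_zero]
  set m : ℤ := ⌊p * 2 ^ (k' : ℤ)⌋ + 1 with hm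
  set c : ℝ := (m : ℝ) * 2 ^ (-k') with hc
  have hpc' : p < c := by
    have h1 : p * 2 ^ (k' : ℤ) < (m : ℝ) := by
      rw [hm]; push_cast; exact Int.lt_floor_add_one _
    calc p = p * 2 ^ (k' : ℤ) * 2 ^ (-k' : ℤ) := by rw [mul_assoc, hcancel, mul_one]
      _ < (m : ℝ) * 2 ^ (-k') := mul_lt_mul_of_pos_right h1 hposk'
  have hcq : c < q := by
    have h1 : (m : ℝ) ≤ p * 2 ^ (k' : ℤ) + 1 := by
      rw [hm]; push_cast
      have := Int.floor_le (p * 2 ^ (k' : ℤ)); linarith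
    have h2 : p * 2 ^ (k' : ℤ) + 1 < q * 2 ^ (k' : ℤ) := by
      have : (2 : ℝ) ^ (-k') * 2 ^ (k' : ℤ) < (q - p) * 2 ^ (k' : ℤ) :=
        mul_lt_mul_of_pos_right hsmall hposk
      rw [two_zpow_mul, neg_add_cancel, zpow_zero] at this
      nlinarith
    calc c = (m : ℝ) * 2 ^ (-k') := hc
      _ ≤ (p * 2 ^ (k' : ℤ) + 1) * 2 ^ (-k') := mul_le_mul_of_nonneg_right h1 hposk'.le
      _ < q * 2 ^ (k' : ℤ) * 2 ^ (-k') := mul_lt_mul_of_pos_right h2 hposk'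
      _ = q := by rw [mul_assoc, hcancel, mul_one]
  set U := {w : EuclideanSpace ℝ (Fin n) | w i < c} with hU
  set V := {w : EuclideanSpace ℝ (Fin n) | c < w i} with hV
  have hUo : IsOpen U := isOpen_lt (contCoord i) continuous_const
  have hVo : IsOpen V := isOpen_lt continuous_const (contCoord i)
  have hcov : t ⊆ U ∪ V := by
    intro w hw
    rcases lt_trichotomy (w i) c with h | h | h
    · exact Or.inl h
    · exfalso
      refine hS w (hts hw) k' hkk' i m ?_
      rw [h, hc, mul_assoc, mul_comm ((2:ℝ) ^ (-k' : ℤ)), hcancel, mul_one]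
    · exact Or.inr h
  have hne1 : (t ∩ U).Nonempty ∧ (t ∩ V).Nonempty := by
    rcases min_cases (x i) (y i) with ⟨h1, h2⟩ | ⟨h1, h2⟩
    · have hqy : q = y i := by rw [hq, max_comm, max_eq_left h2]
      exact ⟨⟨x, hx, by simp only [hU, Set.mem_setOf_eq]; rw [← h1]; exact hpc'⟩,
        ⟨y, hy, by simp only [hV, Set.mem_setOf_eq]; rw [← hqy]; exact hcq⟩⟩
    · have hqx : q = x i := by rw [hq, max_eq_left h2.le]
      exact ⟨⟨y, hy, by simp only [hU, Set.mem_setOf_eq]; rw [← h1]; exact hpc'⟩,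
        ⟨x, hx, by simp only [hV, Set.mem_setOf_eq]; rw [← hqx]; exact hcq⟩⟩
  obtain ⟨w, _, hw1, hw2⟩ := hpc U V hUo hVo hcov hne1.1 hne1.2
  simp only [hU, hV, Set.mem_setOf_eq] at hw1 hw2
  linarith


theorem stmt_15 (n d : ℕ) (hn : 2 ≤ n)
    (Ω : Set (EuclideanSpace ℝ (Fin n))) (hΩ : IsOpen Ω)
    (f : EuclideanSpace ℝ (Fin n) → EuclideanSpace ℝ (Fin d)) (hf : ContinuousOn f Ω)
    (φ : ℝ → ℝ) (hφ : IsGauge φ)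
    (K' : Set (EuclideanSpace ℝ (Fin n))) (hK'c : IsCompact K') (hK'Ω : K' ⊆ Ω)
    (hK'φ : hausdorffGauge φ K' = 0)
    (hfK' : 0 < μH[(n : ℝ)] (f '' K'))
    (k : ℤ) (a : Fin n → ℤ) (hKI : K' ⊆ dyadicCube n k a)
    (hbd : ∀ (k' : ℤ) (a' : Fin n → ℤ), k ≤ k' →
      dyadicCube n k' a' ⊆ dyadicCube n k a →
      μH[(n : ℝ)] (f '' (frontier (dyadicCube n k' a') ∩ K')) = 0) :
    ∃ K : Set (EuclideanSpace ℝ (Fin n)), K ⊆ K' ∧ IsCompact K ∧ Perfect K ∧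
      IsTotallyDisconnected K ∧ hausdorffGauge φ K = 0 ∧ 0 < μH[(n : ℝ)] (f '' K) := by
  classical
  set I := dyadicCube n k a with hI
  have hd0 : (0 : ℝ) < (n : ℝ) := by
    have : 0 < n := by omega
    exact_mod_cast this
  set c := hCont (n : ℝ) (f '' K') with hcdef
  have hc0 : c ≠ 0 := hCont_ne_zero_of_hausdorffMeasure hd0 hfK'
  have hfK'cpt : IsCompact (f '' K') := hK'c.image_of_continuousOn (hf.mono hK'Ω)
  have hcT : c ≠ ∞ := by
    refine ne_of_lt (lt_of_le_of_lt
      (le_trans (MeasureTheory.OuterMeasure.ofFunction_le _) (mfun_le _ _)) ?_)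
    exact ENNReal.rpow_lt_top_of_nonneg hd0.le hfK'cpt.isBounded.ediam_ne_top
  set ι := {p : ℤ × (Fin n → ℤ) // k ≤ p.1 ∧ dyadicCube n p.1 p.2 ⊆ I} with hι
  obtain ⟨δ, hδ0, hδsum⟩ := ENNReal.exists_pos_sum_of_countable' hc0 ι
  have hδT : ∀ i : ι, δ i ≠ ∞ := fun i =>
    ne_top_of_lt ((ENNReal.le_tsum i).trans_lt (hδsum.trans_le (lt_top_iff_ne_top.2 hcT).le))
  have hbd' : ∀ i : ι, hCont (n : ℝ) (f '' (frontier (dyadicCube n i.1.1 i.1.2) ∩ K')) = 0 := by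
    intro i
    refine nonpos_iff_eq_zero.1 ?_
    rw [← hbd i.1.1 i.1.2 i.2.1 i.2.2]
    exact hCont_le_hausdorffMeasure _ _
  choose V hVo hVsub hVlt using fun i : ι =>
    exists_isOpen_hCont_lt hd0 _ (hbd' i) (hδ0 i).ne' (hδT i)
  set O : ι → Set (EuclideanSpace ℝ (Fin n)) := fun i => Ω ∩ f ⁻¹' (V i) with hO
  have hOo : ∀ i, IsOpen (O i) := fun i => hf.isOpen_inter_preimage hΩ (hVo i)
  set K₁ := K' \ ⋃ i, O i with hK₁
  have hK₁c : IsCompact K₁ := hK'c.diff (isOpen_iUnion hOo)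
  have hK₁K' : K₁ ⊆ K' := Set.diff_subset
  have hcov : f '' K' ⊆ (f '' K₁) ∪ ⋃ i, f '' (K' ∩ O i) := by
    rintro _ ⟨z, hz, rfl⟩
    by_cases hz2 : z ∈ ⋃ i, O i
    · obtain ⟨i, hi⟩ := Set.mem_iUnion.1 hz2
      exact Or.inr (Set.mem_iUnion.2 ⟨i, Set.mem_image_of_mem f ⟨hz, hi⟩⟩)
    · exact Or.inl (Set.mem_image_of_mem f ⟨hz, hz2⟩)
  have hle : c ≤ hCont (n : ℝ) (f '' K₁) + ∑' i, δ i := by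
    refine le_trans (measure_mono hcov) (le_trans (measure_union_le _ _) ?_)
    refine add_le_add_right (le_trans (measure_iUnion_le _) ?_) _
    refine ENNReal.tsum_le_tsum fun i => ?_
    refine le_trans (measure_mono ?_) (hVlt i).le
    rintro _ ⟨z, ⟨_, _, hz2⟩, rfl⟩
    exact hz2
  have hK₁pos : 0 < hCont (n : ℝ) (f '' K₁) := by
    rw [pos_iff_ne_zero]
    intro h0
    rw [h0, zero_add] at hle
    exact lt_irrefl c (lt_of_le_of_lt hle hδsum)
  have hμK₁pos : 0 < μH[(n : ℝ)] (f '' K₁) :=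
    lt_of_lt_of_le hK₁pos (hCont_le_hausdorffMeasure _ _)
  have hfree : ∀ z ∈ K₁, ∀ k' : ℤ, k ≤ k' → ∀ (i : Fin n) (m : ℤ),
      z i * 2 ^ (k' : ℤ) ≠ (m : ℝ) := by
    intro z hz k' hk' i m hm
    have hzK' : z ∈ K' := hK₁K' hz
    have hdisj : ∀ j : ι, z ∉ frontier (dyadicCube n j.1.1 j.1.2) := by
      intro j hj
      have : z ∈ O j := ⟨hK'Ω hzK', hVsub j (Set.mem_image_of_mem f ⟨hj, hzK'⟩)⟩
      exact hz.2 (Set.mem_iUnion.2 ⟨j, this⟩)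
    have hzI : z ∈ I := hKI hzK'
    have hIfr : z ∉ frontier I := hdisj ⟨(k, a), le_refl k, subset_refl _⟩
    have hstrict := strict_mem_dyadicCube hzI hIfr
    obtain ⟨a', hsub, hfr⟩ := exists_subcube hk' hstrict i m hm
    exact hdisj ⟨(k', a'), hk', hsub⟩ hfr
  obtain ⟨W, P, hWc, hPperf, hWP⟩ := exists_countable_union_perfect_of_isClosed hK₁c.isClosed
  have hPK₁ : P ⊆ K₁ := by rw [hWP]; exact Set.subset_union_right
  refine ⟨P, hPK₁.trans hK₁K', hK₁c.of_isClosed_subset hPperf.closed hPK₁, hPperf, ?_, ?_, ?_⟩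
  · intro t hts hpc
    exact isTotallyDisconnected_of_dyadicFree (k := k) K₁ hfree t (hts.trans hPK₁) hpc
  · exact measure_mono_null (hPK₁.trans hK₁K') hK'φ
  · haveI := MeasureTheory.Measure.noAtoms_hausdorff (EuclideanSpace ℝ (Fin d)) hd0
    have hWnull : μH[(n : ℝ)] (f '' W) = 0 := (hWc.image f).measure_zero _
    have hsub : f '' K₁ ⊆ f '' W ∪ f '' P := by rw [hWP, Set.image_union]
    calc (0 : ℝ≥0∞) < μH[(n : ℝ)] (f '' K₁) := hμK₁pos
      _ ≤ μH[(n : ℝ)] (f '' W ∪ f '' P) := measure_mono hsub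
      _ ≤ μH[(n : ℝ)] (f '' W) + μH[(n : ℝ)] (f '' P) := measure_union_le _ _
      _ = μH[(n : ℝ)] (f '' P) := by rw [hWnull, zero_add]
end
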